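/- Fix λ₀ ∈ ℂ. The discrete symplectic system z_k = 𝕊_k(λ) z_{k+1} is definite on a discrete interval I ⊆ ℕ₀ (i.e., for every λ ∈ ℂ, every nontrivial solution z(λ) satisfies Σ_{k∈I} z_k(λ)* Ψ_k z_k(λ) > 0) if and only if every solution z(λ₀) of the system at λ₀ with Σ_{k∈I} z_k(λ₀)* Ψ_k z_k(λ₀) = 0 vanishes identically on I. -/

import Mathlib

open Matrix
open scoped ComplexOrder

private def stmt13UpSeq {α : Type*} (f : ℕ → α → α) (v : α) : ℕ → α :=
  fun j => Nat.rec v f j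

private lemma stmt13UpSeq_succ {α : Type*} (f : ℕ → α → α) (v : α) (j : ℕ) :
    stmt13UpSeq f v (j + 1) = f j (stmt13UpSeq f v j) := rfl

private lemma stmt13_left_inv {n : ℕ}
    (J Sk P : Matrix (Fin n ⊕ Fin n) (Fin n ⊕ Fin n) ℂ)
    (hJJ : J * J = -1) (hSk : Skᴴ * J * Sk = J) (hP : P * J * P = 0) (l : ℂ) :
    ((-J * Skᴴ * J) * (1 + l • (J * P))) * (Sk - l • (J * P * Sk)) = 1 := by
  have hAA : (J * P) * (J * P) = 0 := by
    rw [mul_assoc J P (J * P), ← mul_assoc P J P, hP, mul_zero]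
  have h1 : Sk - l • (J * P * Sk) = (1 - l • (J * P)) * Sk := by
    rw [sub_mul, one_mul, smul_mul_assoc]
  have h2 : (1 + l • (J * P)) * (1 - l • (J * P)) = 1 := by
    simp [mul_sub, add_mul, mul_smul_comm, smul_mul_assoc, hAA, smul_smul]
  rw [h1, ← mul_assoc, mul_assoc (-J * Skᴴ * J), h2, mul_one]
  have hSk' : Skᴴ * (J * Sk) = J := by rw [← mul_assoc, hSk]
  simp only [mul_assoc, neg_mul]
  rw [hSk', hJJ, neg_neg]

set_option maxHeartbeats 1000000 in
/-- Lemma 3.2: definiteness on a discrete interval `I` holds iff, for a single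
fixed `λ₀`, every solution of the system at `λ₀` whose `Ψ`-seminorm over `I`
vanishes is trivial on `I`. -/
theorem stmt13 (n : ℕ)
    (J : Matrix (Fin n ⊕ Fin n) (Fin n ⊕ Fin n) ℂ)
    (hJ : J = Matrix.fromBlocks 0 1 (-1) 0)
    (S Ψ : ℕ → Matrix (Fin n ⊕ Fin n) (Fin n ⊕ Fin n) ℂ)
    (hS : ∀ k : ℕ, (S k)ᴴ * J * S k = J)
    (hΨpsd : ∀ k : ℕ, (Ψ k).PosSemidef)
    (hΨJ : ∀ k : ℕ, Ψ k * J * Ψ k = 0)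
    (I : Set ℕ) (hI : I.OrdConnected) (hne : I.Nonempty)
    (l₀ : ℂ) :
    -- definiteness on I:
    (∀ (l : ℂ) (z : ℕ → (Fin n ⊕ Fin n) → ℂ),
        (∀ k : ℕ, z k = (S k - l • (J * Ψ k * S k)) *ᵥ z (k + 1)) → z ≠ 0 →
        0 < ∑' k : I, ENNReal.ofReal ((star (z (k : ℕ)) ⬝ᵥ (Ψ (k : ℕ) *ᵥ z (k : ℕ))).re)) ↔
      -- characterization at the single value l₀:
      (∀ z : ℕ → (Fin n ⊕ Fin n) → ℂ,
        (∀ k : ℕ, z k = (S k - l₀ • (J * Ψ k * S k)) *ᵥ z (k + 1)) →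
        (∑' k : I, ENNReal.ofReal ((star (z (k : ℕ)) ⬝ᵥ (Ψ (k : ℕ) *ᵥ z (k : ℕ))).re)) = 0 →
        ∀ k ∈ I, z k = 0) := by
  classical
  have hJJ : J * J = -1 := by
    subst hJ
    rw [Matrix.fromBlocks_multiply]
    simp [← Matrix.fromBlocks_one, Matrix.fromBlocks_neg]
  have hNM : ∀ (l : ℂ) (k : ℕ),
      ((-J * (S k)ᴴ * J) * (1 + l • (J * Ψ k))) * (S k - l • (J * Ψ k * S k)) = 1 :=
    fun l k => stmt13_left_inv J (S k) (Ψ k) hJJ (hS k) (hΨJ k) l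
  have hMN : ∀ (l : ℂ) (k : ℕ),
      (S k - l • (J * Ψ k * S k)) * ((-J * (S k)ᴴ * J) * (1 + l • (J * Ψ k))) = 1 :=
    fun l k => mul_eq_one_comm.mp (hNM l k)
  have cancelNM : ∀ (l : ℂ) (k : ℕ) (v : (Fin n ⊕ Fin n) → ℂ),
      ((-J * (S k)ᴴ * J) * (1 + l • (J * Ψ k))) *ᵥ ((S k - l • (J * Ψ k * S k)) *ᵥ v) = v := by
    intro l k v
    rw [Matrix.mulVec_mulVec, hNM, Matrix.one_mulVec]
  have cancelMN : ∀ (l : ℂ) (k : ℕ) (v : (Fin n ⊕ Fin n) → ℂ),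
      (S k - l • (J * Ψ k * S k)) *ᵥ (((-J * (S k)ᴴ * J) * (1 + l • (J * Ψ k))) *ᵥ v) = v := by
    intro l k v
    rw [Matrix.mulVec_mulVec, hMN, Matrix.one_mulVec]
  constructor
  · -- definiteness ⇒ characterization at l₀
    intro hdef z hz hsum k hk
    by_contra h0
    have hzne : z ≠ 0 := fun h => h0 (by simp [h])
    have hpos := hdef l₀ z hz hzne
    rw [hsum] at hpos
    exact lt_irrefl _ hpos
  · -- characterization at l₀ ⇒ definiteness
    intro hchar l z hz hzne
    rw [pos_iff_ne_zero]
    intro hsum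
    apply hzne
    -- every term of the sum vanishes, hence `Ψ k *ᵥ z k = 0` on `I`
    have hterm : ∀ k, k ∈ I → Ψ k *ᵥ z k = 0 := by
      intro k hk
      have h1 := ENNReal.tsum_eq_zero.mp hsum ⟨k, hk⟩
      rw [ENNReal.ofReal_eq_zero] at h1
      have h2 := (hΨpsd k).dotProduct_mulVec_nonneg (z k)
      rw [Complex.le_def] at h2
      have h3 : star (z k) ⬝ᵥ Ψ k *ᵥ z k = 0 := by
        apply Complex.ext
        · simpa using le_antisymm h1 (by simpa using h2.1)
        · simpa using h2.2.symm
      exact ((hΨpsd k).dotProduct_mulVec_zero_iff (z k)).mp h3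
    -- on indices where `Ψ k *ᵥ z k = 0`, the recurrence holds at every parameter
    have hΨS : ∀ k, Ψ k *ᵥ z k = Ψ k *ᵥ (S k *ᵥ z (k + 1)) := by
      intro k
      have h4 : Ψ k * (J * Ψ k * S k) = 0 := by
        rw [← mul_assoc, ← mul_assoc, hΨJ k, zero_mul]
      rw [hz k, Matrix.sub_mulVec, Matrix.smul_mulVec, Matrix.mulVec_sub,
        Matrix.mulVec_smul, Matrix.mulVec_mulVec, Matrix.mulVec_mulVec, h4,
        Matrix.zero_mulVec, smul_zero, sub_zero]
    have hrec : ∀ (l' : ℂ) (k : ℕ), Ψ k *ᵥ z k = 0 →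
        z k = (S k - l' • (J * Ψ k * S k)) *ᵥ z (k + 1) := by
      intro l' k hk0
      have h4 : Ψ k *ᵥ (S k *ᵥ z (k + 1)) = 0 := (hΨS k) ▸ hk0
      have h5 : (J * Ψ k * S k) *ᵥ z (k + 1) = 0 := by
        rw [mul_assoc, ← Matrix.mulVec_mulVec, ← Matrix.mulVec_mulVec, h4, Matrix.mulVec_zero]
      rw [Matrix.sub_mulVec, Matrix.smul_mulVec, h5, smul_zero, sub_zero,
        hz k, Matrix.sub_mulVec, Matrix.smul_mulVec, h5, smul_zero, sub_zero]
    obtain ⟨k₀, hk₀⟩ := hne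
    -- construct the solution `z'` at `l₀` agreeing with `z` at `k₀`
    obtain ⟨w, hw0, hwsucc⟩ :
        ∃ w : ℕ → (Fin n ⊕ Fin n) → ℂ, w 0 = z k₀ ∧ ∀ j,
          w (j + 1) = ((-J * (S (k₀ + j))ᴴ * J) * (1 + l₀ • (J * Ψ (k₀ + j)))) *ᵥ w j :=
      ⟨stmt13UpSeq (fun j x => ((-J * (S (k₀ + j))ᴴ * J) * (1 + l₀ • (J * Ψ (k₀ + j)))) *ᵥ x)
        (z k₀), rfl, stmt13UpSeq_succ _ _⟩
    obtain ⟨u, hu0, husucc⟩ :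
        ∃ u : ℕ → (Fin n ⊕ Fin n) → ℂ, u 0 = z k₀ ∧ ∀ j,
          u (j + 1) = (S (k₀ - j - 1) - l₀ • (J * Ψ (k₀ - j - 1) * S (k₀ - j - 1))) *ᵥ u j :=
      ⟨stmt13UpSeq (fun j x =>
        (S (k₀ - j - 1) - l₀ • (J * Ψ (k₀ - j - 1) * S (k₀ - j - 1))) *ᵥ x) (z k₀),
        rfl, stmt13UpSeq_succ _ _⟩
    obtain ⟨z', hz'pos, hz'neg⟩ :
        ∃ z' : ℕ → (Fin n ⊕ Fin n) → ℂ,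
          (∀ k, k₀ ≤ k → z' k = w (k - k₀)) ∧ (∀ k, k < k₀ → z' k = u (k₀ - k)) :=
      ⟨fun k => if k₀ ≤ k then w (k - k₀) else u (k₀ - k),
        fun k hk => if_pos hk, fun k hk => if_neg (not_le.mpr hk)⟩
    have hz'k₀ : z' k₀ = z k₀ := by
      rw [hz'pos k₀ le_rfl, Nat.sub_self, hw0]
    -- `z'` is a solution at `l₀`
    have hz'rec : ∀ k, z' k = (S k - l₀ • (J * Ψ k * S k)) *ᵥ z' (k + 1) := by
      intro k
      by_cases hk : k₀ ≤ k
      · rw [hz'pos k hk, hz'pos (k + 1) (le_trans hk (Nat.le_succ k))]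
        have e3 : k + 1 - k₀ = (k - k₀) + 1 := by omega
        rw [e3, hwsucc]
        have e4 : k₀ + (k - k₀) = k := by omega
        rw [e4, cancelMN]
      · have hklt : k < k₀ := not_le.mp hk
        have e3 : z' (k + 1) = u (k₀ - k - 1) := by
          by_cases hk1 : k₀ ≤ k + 1
          · have e4 : k₀ - k - 1 = 0 := by omega
            have e5 : k + 1 - k₀ = 0 := by omega
            rw [e4, hu0, hz'pos (k + 1) hk1, e5, hw0]
          · rw [hz'neg (k + 1) (not_le.mp hk1)]
            congr 1
        rw [hz'neg k hklt, e3]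
        have e2 : k₀ - k = (k₀ - k - 1) + 1 := by omega
        have e5 : k₀ - (k₀ - k - 1) - 1 = k := by omega
        conv_lhs => rw [e2, husucc, e5]
    -- `z'` agrees with `z` on `I`
    have hup : ∀ j, k₀ + j ∈ I → z' (k₀ + j) = z (k₀ + j) := by
      intro j
      induction j with
      | zero => intro _; simpa using hz'k₀
      | succ j ih =>
        intro hmem
        have memj : k₀ + j ∈ I := hI.out hk₀ hmem ⟨by omega, by omega⟩
        have ihj := ih memj
        have hcz' : z' (k₀ + j + 1) =
            ((-J * (S (k₀ + j))ᴴ * J) * (1 + l₀ • (J * Ψ (k₀ + j)))) *ᵥ z' (k₀ + j) := by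
          rw [hz'rec (k₀ + j), cancelNM]
        have hcz : z (k₀ + j + 1) =
            ((-J * (S (k₀ + j))ᴴ * J) * (1 + l₀ • (J * Ψ (k₀ + j)))) *ᵥ z (k₀ + j) := by
          rw [hrec l₀ (k₀ + j) (hterm _ memj), cancelNM]
        have e6 : k₀ + (j + 1) = k₀ + j + 1 := rfl
        rw [e6, hcz', hcz, ihj]
    have hdown : ∀ j, k₀ - j ∈ I → z' (k₀ - j) = z (k₀ - j) := by
      intro j
      induction j with
      | zero => intro _; simpa using hz'k₀
      | succ j ih =>
        intro hmem
        by_cases hj : j < k₀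
        · have memj : k₀ - j ∈ I := hI.out hmem hk₀ ⟨by omega, by omega⟩
          have ihj := ih memj
          have e : k₀ - (j + 1) + 1 = k₀ - j := by omega
          have h7 := hz'rec (k₀ - (j + 1))
          rw [e] at h7
          have h8 := hrec l₀ (k₀ - (j + 1)) (hterm _ hmem)
          rw [e] at h8
          rw [h7, h8, ihj]
        · have e : k₀ - (j + 1) = k₀ - j := by omega
          rw [e]
          exact ih (e ▸ hmem)
    have hz'eq : ∀ k, k ∈ I → z' k = z k := by
      intro k hk
      by_cases hkk : k₀ ≤ k
      · obtain ⟨j, rfl⟩ : ∃ j, k = k₀ + j := ⟨k - k₀, by omega⟩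
        exact hup j hk
      · obtain ⟨j, rfl⟩ : ∃ j, k = k₀ - j := ⟨k₀ - k, by omega⟩
        exact hdown j hk
    -- the `Ψ`-sum of `z'` over `I` vanishes
    have hsum' :
        (∑' k : I, ENNReal.ofReal ((star (z' (k : ℕ)) ⬝ᵥ (Ψ (k : ℕ) *ᵥ z' (k : ℕ))).re)) = 0 := by
      rw [← hsum]
      exact tsum_congr fun k => by rw [hz'eq k k.2]
    have hz'I := hchar z' hz'rec hsum'
    have hzk₀ : z k₀ = 0 := by
      rw [← hz'eq k₀ hk₀]
      exact hz'I k₀ hk₀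
    -- propagate the zero to all of ℕ
    have hupz : ∀ j, z (k₀ + j) = 0 := by
      intro j
      induction j with
      | zero => simpa using hzk₀
      | succ j ih =>
        have h6 : (S (k₀ + j) - l • (J * Ψ (k₀ + j) * S (k₀ + j))) *ᵥ z (k₀ + j + 1) = 0 := by
          rw [← hz (k₀ + j)]
          exact ih
        have h7 := cancelNM l (k₀ + j) (z (k₀ + j + 1))
        rw [h6, Matrix.mulVec_zero] at h7
        exact h7.symm
    have hdownz : ∀ j, z (k₀ - j) = 0 := by
      intro j
      induction j with
      | zero => simpa using hzk₀
      | succ j ih =>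
        by_cases hj : j < k₀
        · have e : k₀ - (j + 1) + 1 = k₀ - j := by omega
          rw [hz (k₀ - (j + 1)), e, ih, Matrix.mulVec_zero]
        · have e : k₀ - (j + 1) = k₀ - j := by omega
          rw [e]
          exact ih
    funext k
    by_cases hk : k₀ ≤ k
    · obtain ⟨j, rfl⟩ : ∃ j, k = k₀ + j := ⟨k - k₀, by omega⟩
      exact hupz j
    · obtain ⟨j, rfl⟩ : ∃ j, k = k₀ - j := ⟨k₀ - k, by omega⟩
      exact hdownz j
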